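/- Let d ∈ ℕ, let K = Δᵈ = {x ∈ ℝᵈ : xᵢ ≥ 0 for all i, Σᵢ xᵢ ≤ 1} be the standard simplex, and let δ ∈ (0, 8^{−d}]. Then K_δ ⊆ {x ∈ ℝᵈ : x₁ ≤ 1 − δ^{1/d}} and d_𝔏(K, K_δ) ≥ 1 + (1/2)·δ^{1/d}. -/

import Mathlib

open MeasureTheory Set
open scoped RealInnerProductSpace ENNReal

noncomputable section

/-- Euclidean space `ℝᵈ`. -/
abbrev Euc (d : ℕ) := EuclideanSpace ℝ (Fin d)

/-- The convex floating body `K_δ`. -/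
def floatingBody {d : ℕ} (K : Set (Euc d)) (δ : ℝ) : Set (Euc d) :=
  ⋂₀ {H : Set (Euc d) | ∃ θ : Euc d, ∃ t : ℝ, ‖θ‖ = 1 ∧
      H = {x : Euc d | t ≤ ⟪x, θ⟫} ∧
      ENNReal.ofReal (1 - δ) * volume K ≤ volume (H ∩ K)}

/-- The logarithmic Hausdorff distance. -/
def logHausdorffDist {d : ℕ} (K L : Set (Euc d)) : ℝ :=
  sInf {lam : ℝ | 1 ≤ lam ∧ ∃ x ∈ interior (K ∩ L),
    (fun y => lam⁻¹ • (y - x) + x) '' K ⊆ L ∧ L ⊆ (fun y => lam • (y - x) + x) '' K}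

/-- The standard simplex `Δᵈ = {x : ∀ i, xᵢ ≥ 0, Σ xᵢ ≤ 1}`. -/
def stdSimplex' (d : ℕ) : Set (Euc d) :=
  {x : Euc d | (∀ i, 0 ≤ x i) ∧ ∑ i, x i ≤ 1}

open scoped Pointwise

namespace FBaux
variable {d : ℕ}

lemma abs_coord_le (x : Euc d) (i : Fin d) : |x i| ≤ ‖x‖ := by
  rw [EuclideanSpace.norm_eq]
  rw [show |x i| = Real.sqrt ((x i) ^ 2) from (Real.sqrt_sq_eq_abs _).symm]
  apply Real.sqrt_le_sqrt
  have : (x i) ^ 2 = ‖x i‖ ^ 2 := by rw [Real.norm_eq_abs, sq_abs]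
  rw [this]
  exact Finset.single_le_sum (f := fun j => ‖x j‖ ^ 2) (fun j _ => by positivity) (Finset.mem_univ i)

lemma sum_abs_le (x : Euc d) : ∑ i, |x i - 0| ≤ (d : ℝ) * ‖x‖ := by
  simp only [sub_zero]
  calc ∑ i, |x i| ≤ ∑ _i : Fin d, ‖x‖ := Finset.sum_le_sum fun i _ => abs_coord_le x i
  _ = (d : ℝ) * ‖x‖ := by simp [mul_comm]

lemma isClosed_K : IsClosed (stdSimplex' d) := by
  have h1 : IsClosed {x : Euc d | ∀ i, 0 ≤ x i} := by
    have : {x : Euc d | ∀ i, 0 ≤ x i} = ⋂ i, {x : Euc d | 0 ≤ x i} := by ext x; simp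
    rw [this]
    exact isClosed_iInter fun i => isClosed_le continuous_const (EuclideanSpace.proj i).continuous
  have h2 : IsClosed {x : Euc d | ∑ i, x i ≤ 1} :=
    isClosed_le (continuous_finset_sum _ fun i _ => (EuclideanSpace.proj i).continuous)
      continuous_const
  exact h1.inter h2

lemma measurableSet_K : MeasurableSet (stdSimplex' d) := isClosed_K.measurableSet

lemma K_subset_ball : stdSimplex' d ⊆ Metric.closedBall 0 1 := by
  intro x hx
  rw [Metric.mem_closedBall, dist_zero_right, EuclideanSpace.norm_eq]
  rw [show (1 : ℝ) = Real.sqrt 1 by simp]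
  apply Real.sqrt_le_sqrt
  calc ∑ i, ‖x i‖ ^ 2 ≤ ∑ i, x i := by
        apply Finset.sum_le_sum
        intro i _
        have h0 := hx.1 i
        have h1 : x i ≤ 1 := by
          calc x i ≤ ∑ j, x j := Finset.single_le_sum (fun j _ => hx.1 j) (Finset.mem_univ i)
          _ ≤ 1 := hx.2
        rw [Real.norm_eq_abs, abs_of_nonneg h0]
        nlinarith
  _ ≤ 1 := hx.2

lemma volK_lt_top : volume (stdSimplex' d) < ⊤ :=
  lt_of_le_of_lt (measure_mono K_subset_ball) measure_closedBall_lt_top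

/-- centroid of the simplex -/
def cent (d : ℕ) : Euc d := WithLp.toLp 2 (fun _ => ((d : ℝ) + 1)⁻¹)

/-- inradius-ish -/
def r0 (d : ℕ) : ℝ := (2 * ((d : ℝ) + 1) * d)⁻¹

lemma r0_pos (hd : 0 < d) : 0 < r0 d := by
  have : (0:ℝ) < d := by exact_mod_cast hd
  unfold r0; positivity

lemma ball_subset_K (hd : 0 < d) : Metric.ball (cent d) (r0 d) ⊆ stdSimplex' d := by
  intro y hy
  rw [Metric.mem_ball, dist_eq_norm] at hy
  have hd1 : (1:ℝ) ≤ d := by exact_mod_cast hd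
  have hdpos : (0:ℝ) < d := by linarith
  have hcoord : ∀ i, |y i - ((d : ℝ) + 1)⁻¹| < r0 d := by
    intro i
    have := abs_coord_le (y - cent d) i
    have he : (y - cent d) i = y i - ((d : ℝ) + 1)⁻¹ := rfl
    rw [he] at this
    linarith
  have hr0le : r0 d ≤ (2 * ((d : ℝ) + 1))⁻¹ := by
    unfold r0
    rw [inv_le_inv₀ (by positivity) (by positivity)]
    nlinarith
  constructor
  · intro i
    have := hcoord i
    have h1 : -(r0 d) < y i - ((d : ℝ) + 1)⁻¹ := neg_lt_of_abs_lt this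
    have h2 : (2 * ((d : ℝ) + 1))⁻¹ < ((d : ℝ) + 1)⁻¹ := by
      rw [inv_lt_inv₀ (by positivity) (by positivity)]; nlinarith
    nlinarith [hr0le]
  · have hsum : ∑ i, y i ≤ ∑ _i : Fin d, ((d : ℝ) + 1)⁻¹ + (d : ℝ) * ‖y - cent d‖ := by
      have h := sum_abs_le (y - cent d)
      have : ∑ i, y i = ∑ i, (((d : ℝ) + 1)⁻¹ + (y i - ((d : ℝ) + 1)⁻¹)) := by
        apply Finset.sum_congr rfl; intro i _; ring
      rw [this, Finset.sum_add_distrib]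
      have h2 : ∑ i, (y i - ((d : ℝ) + 1)⁻¹) ≤ ∑ i, |(y - cent d) i - 0| := by
        apply Finset.sum_le_sum
        intro i _
        have he : (y - cent d) i = y i - ((d : ℝ) + 1)⁻¹ := rfl
        rw [he, sub_zero]
        exact le_abs_self _
      linarith
    have h3 : (d : ℝ) * ‖y - cent d‖ ≤ (d : ℝ) * r0 d := by
      apply mul_le_mul_of_nonneg_left hy.le (by positivity)
    have h4 : (d : ℝ) * r0 d = (2 * ((d : ℝ) + 1))⁻¹ := by
      unfold r0
      field_simp
    simp only [Finset.sum_const, Finset.card_univ, Fintype.card_fin, nsmul_eq_mul] at hsum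
    have h5 : (d : ℝ) * ((d : ℝ) + 1)⁻¹ + (2 * ((d : ℝ) + 1))⁻¹ ≤ 1 := by
      have : (d : ℝ) * ((d : ℝ) + 1)⁻¹ = 1 - (((d:ℝ)+1))⁻¹ := by
        field_simp
        ring
      rw [this]
      have : (2 * ((d : ℝ) + 1))⁻¹ ≤ ((d:ℝ)+1)⁻¹ := by
        rw [inv_le_inv₀ (by positivity) (by positivity)]; nlinarith
      linarith
    linarith

lemma volK_pos (hd : 0 < d) : 0 < volume (stdSimplex' d) :=
  lt_of_lt_of_le (Metric.measure_ball_pos volume (cent d) (r0_pos hd)) (measure_mono (ball_subset_K hd))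

lemma sum_ite_single (f : Fin d → ℝ) (v : ℝ) (j : Fin d) :
    ∑ i, (if i = j then v else f i) = ∑ i, f i + (v - f j) := by
  have h : ∀ i, (if i = j then v else f i) = f i + (if i = j then v - f i else 0) := by
    intro i; by_cases h : i = j <;> simp [h]
  simp_rw [h, Finset.sum_add_distrib, Finset.sum_ite_eq' Finset.univ j (fun i => v - f i)]
  simp

/-- diagonal linear map -/
def diagMap (c : Fin d → ℝ) : Euc d →ₗ[ℝ] Euc d where
  toFun x := WithLp.toLp 2 (fun i => c i * x i)
  map_add' x y := by ext i; show c i * (x i + y i) = c i * x i + c i * y i; ring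
  map_smul' r x := by ext i; show c i * (r * x i) = r * (c i * x i); ring

lemma diagMap_apply (c : Fin d → ℝ) (x : Euc d) (i : Fin d) : diagMap c x i = c i * x i := rfl

lemma det_diagMap (c : Fin d → ℝ) : LinearMap.det (diagMap c) = ∏ i, c i := by
  classical
  rw [← LinearMap.det_toMatrix (EuclideanSpace.basisFun (Fin d) ℝ).toBasis]
  have h : LinearMap.toMatrix (EuclideanSpace.basisFun (Fin d) ℝ).toBasis
      (EuclideanSpace.basisFun (Fin d) ℝ).toBasis (diagMap c) = Matrix.diagonal c := by
    ext i j
    rw [LinearMap.toMatrix_apply]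
    simp only [OrthonormalBasis.coe_toBasis, EuclideanSpace.basisFun_apply,
      OrthonormalBasis.coe_toBasis_repr_apply, EuclideanSpace.basisFun_repr,
      diagMap_apply, EuclideanSpace.single_apply, Matrix.diagonal]
    by_cases h : i = j <;> simp [h]
  rw [h, Matrix.det_diagonal]

/-- linear part of the vertex-swap map -/
def swapLin (j : Fin d) : Euc d →ₗ[ℝ] Euc d where
  toFun x := WithLp.toLp 2 (fun i => if i = j then -∑ k, x k else x i)
  map_add' x y := by
    ext i
    show (if i = j then -∑ k, (x k + y k) else x i + y i)
      = (if i = j then -∑ k, x k else x i) + (if i = j then -∑ k, y k else y i)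
    by_cases h : i = j <;> simp [h, Finset.sum_add_distrib]; ring
  map_smul' r x := by
    ext i
    show (if i = j then -∑ k, r * x k else r * x i) = r * (if i = j then -∑ k, x k else x i)
    by_cases h : i = j <;> simp [h, ← Finset.mul_sum]

lemma swapLin_apply (j : Fin d) (x : Euc d) (i : Fin d) :
    swapLin j x i = if i = j then -∑ k, x k else x i := rfl

lemma sum_swapLin (j : Fin d) (x : Euc d) : ∑ k, swapLin j x k = -x j := by
  have : ∀ k, swapLin j x k = if k = j then -∑ l, x l else x k := fun k => rfl
  simp_rw [this]
  rw [sum_ite_single]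
  ring

lemma swapLin_invol (j : Fin d) (x : Euc d) : swapLin j (swapLin j x) = x := by
  ext i
  rw [swapLin_apply, sum_swapLin]
  by_cases h : i = j
  · rw [if_pos h, h]; ring
  · rw [if_neg h, swapLin_apply, if_neg h]

lemma abs_det_swapLin (j : Fin d) : |LinearMap.det (swapLin j)| = 1 := by
  have h : (swapLin j) ∘ₗ (swapLin j) = LinearMap.id := by
    apply LinearMap.ext; intro x; exact swapLin_invol j x
  have h2 : LinearMap.det (swapLin j) * LinearMap.det (swapLin j) = 1 := by
    rw [← LinearMap.det_comp, h, LinearMap.det_id]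
  rcases mul_self_eq_one_iff.mp h2 with h3 | h3 <;> rw [h3] <;> norm_num

lemma two_mul_succ_le_pow : ∀ q : ℕ, 1 ≤ q → 2 * (q + 1) ≤ 8 ^ q := by
  intro q hq
  induction q with
  | zero => omega
  | succ n ih =>
    by_cases hn : 1 ≤ n
    · have h1 := ih hn
      have h2 : 8 ^ (n + 1) = 8 * 8 ^ n := pow_succ' 8 n
      omega
    · have hn0 : n = 0 := by omega
      subst hn0; norm_num

lemma nat_key (d k : ℕ) (hk1 : 1 ≤ k) (hkd : k ≤ d) : (2 * (d + 1)) ^ k ≤ k ^ k * 8 ^ d := by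
  set q := d / k with hq
  have hq1 : 1 ≤ q := (Nat.one_le_div_iff (by omega)).mpr hkd
  have hmod := Nat.div_add_mod d k
  have hmodlt : d % k < k := Nat.mod_lt _ (by omega)
  have hd1 : d + 1 ≤ k * (q + 1) := by
    have : d = k * q + d % k := hmod.symm
    nlinarith
  calc (2 * (d + 1)) ^ k ≤ (k * 8 ^ q) ^ k := by
        apply Nat.pow_le_pow_left
        calc 2 * (d + 1) ≤ 2 * (k * (q + 1)) := by omega
        _ = k * (2 * (q + 1)) := by ring
        _ ≤ k * 8 ^ q := Nat.mul_le_mul_left k (two_mul_succ_le_pow q hq1)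
  _ = k ^ k * (8 ^ (q * k)) := by rw [mul_pow, ← pow_mul]
  _ ≤ k ^ k * 8 ^ d := by
        apply Nat.mul_le_mul_left
        apply Nat.pow_le_pow_right (by norm_num)
        rw [hq]
        exact Nat.div_mul_le_self d k

lemma real_key (d k : ℕ) (hk1 : 1 ≤ k) (hkd : k ≤ d) :
    (8 : ℝ) ^ (-(d : ℝ)) ≤ ((k : ℝ) / (2 * ((d : ℝ) + 1))) ^ k := by
  have h := nat_key d k hk1 hkd
  have hcast : ((2 : ℝ) * ((d : ℝ) + 1)) ^ k ≤ (k : ℝ) ^ k * 8 ^ d := by exact_mod_cast h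
  have h8 : ((8 : ℝ) ^ (d : ℕ)) = (8 : ℝ) ^ ((d : ℝ)) := (Real.rpow_natCast 8 d).symm
  rw [Real.rpow_neg (by norm_num : (0:ℝ) ≤ 8), ← h8, div_pow]
  rw [inv_le_iff_one_le_mul₀ (by positivity), div_mul_eq_mul_div, le_div_iff₀ (by positivity)]
  have hcm : (k : ℝ) ^ k * 8 ^ d = (8:ℝ) ^ (d:ℕ) * (k:ℝ) ^ k := mul_comm _ _
  linarith [hcast]

/-- core arithmetic: the product of the shrink factors cannot be ≤ δ if `s` is too deep -/
lemma arith_contra (hd : 0 < d) {δ : ℝ} (hδ : δ ∈ Set.Ioc (0 : ℝ) ((8 : ℝ) ^ (-(d : ℝ))))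
    (a : Fin d → ℝ) (ha : ∀ i, 0 ≤ a i) {s : ℝ} (hs : 0 < s)
    (hB : (∑ i, a i) / (2 * ((d : ℝ) + 1)) < s)
    (hprod : ∏ i, (if a i ≤ s then 1 else s / a i) ≤ δ) : False := by
  classical
  have hδ1 : δ < 1 := by
    refine lt_of_le_of_lt hδ.2 ?_
    apply Real.rpow_lt_one_of_one_lt_of_neg (by norm_num)
    simp only [neg_neg, Left.neg_neg_iff]
    exact_mod_cast hd
  set S : Finset (Fin d) := Finset.univ.filter (fun i => ¬ a i ≤ s) with hS
  have hsplit : ∏ i, (if a i ≤ s then 1 else s / a i) = ∏ i ∈ S, s / a i := by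
    rw [← Finset.prod_filter_mul_prod_filter_not Finset.univ (fun i => a i ≤ s)]
    have h1 : ∏ i ∈ Finset.univ.filter (fun i => a i ≤ s), (if a i ≤ s then 1 else s / a i)
        = 1 := by
      rw [Finset.prod_congr rfl (fun i hi => if_pos (Finset.mem_filter.mp hi).2)]
      exact Finset.prod_const_one
    have h2 : ∏ i ∈ S, (if a i ≤ s then 1 else s / a i) = ∏ i ∈ S, s / a i :=
      Finset.prod_congr rfl (fun i hi => if_neg (Finset.mem_filter.mp hi).2)
    rw [h1, h2, one_mul]
  rw [hsplit] at hprod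
  have hSne : S.Nonempty := by
    by_contra h
    rw [Finset.not_nonempty_iff_eq_empty] at h
    rw [h, Finset.prod_empty] at hprod
    linarith
  have haS : ∀ i ∈ S, s < a i := by
    intro i hi
    have := (Finset.mem_filter.mp hi).2
    linarith [lt_of_not_ge this]
  set k := S.card with hk
  have hk1 : 1 ≤ k := Finset.card_pos.mpr hSne
  have hkd : k ≤ d := by
    calc k ≤ Finset.univ.card := Finset.card_le_card (Finset.filter_subset _ _)
    _ = d := by simp
  have hkR : (0 : ℝ) < k := by exact_mod_cast hk1
  have hSsum : 0 < ∑ i ∈ S, a i := Finset.sum_pos (fun i hi => lt_trans hs (haS i hi)) hSne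
  -- AM-GM
  have hamgm : ∏ i ∈ S, a i ≤ ((∑ i ∈ S, a i) / k) ^ k := by
    have hgm := Real.geom_mean_le_arith_mean_weighted S (fun _ => (k : ℝ)⁻¹) a
      (fun i _ => by positivity)
      (by rw [Finset.sum_const, ← hk, nsmul_eq_mul, mul_inv_cancel₀ hkR.ne'])
      (fun i _ => ha i)
    have hpow : (∏ i ∈ S, a i ^ ((k : ℝ)⁻¹)) ^ k = ∏ i ∈ S, a i := by
      rw [← Finset.prod_pow]
      apply Finset.prod_congr rfl
      intro i _
      rw [← Real.rpow_natCast (a i ^ ((k:ℝ)⁻¹)) k, ← Real.rpow_mul (ha i),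
        inv_mul_cancel₀ (ne_of_gt hkR), Real.rpow_one]
    rw [← hpow]
    apply pow_le_pow_left₀ (Finset.prod_nonneg fun i _ => Real.rpow_nonneg (ha i) _)
    calc ∏ i ∈ S, a i ^ ((k : ℝ)⁻¹) ≤ ∑ i ∈ S, (k : ℝ)⁻¹ * a i := hgm
    _ = (∑ i ∈ S, a i) / k := by rw [← Finset.mul_sum]; ring
  have hprodS : ∏ i ∈ S, s / a i = s ^ k / ∏ i ∈ S, a i := by
    rw [Finset.prod_div_distrib, Finset.prod_const]
  have hprodpos : 0 < ∏ i ∈ S, a i := Finset.prod_pos (fun i hi => lt_trans hs (haS i hi))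
  -- chain
  have hSle : ∑ i ∈ S, a i ≤ ∑ i, a i := Finset.sum_le_sum_of_subset_of_nonneg
    (Finset.subset_univ S) (fun i _ _ => ha i)
  have hstep1 : (k : ℝ) / (2 * ((d : ℝ) + 1)) < s * k / (∑ i ∈ S, a i) := by
    rw [div_lt_div_iff₀ (by positivity) hSsum]
    have h1 : (∑ i ∈ S, a i) / (2 * ((d : ℝ) + 1)) < s := lt_of_le_of_lt
      (by apply div_le_div_of_nonneg_right hSle; positivity
          ) hB
    rw [div_lt_iff₀ (by positivity)] at h1
    nlinarith
  have hstep2 : (s * k / (∑ i ∈ S, a i)) ^ k ≤ s ^ k / ∏ i ∈ S, a i := by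
    rw [div_pow, mul_pow]
    rw [div_le_div_iff₀ (by positivity) hprodpos]
    calc s ^ k * (k:ℝ) ^ k * ∏ i ∈ S, a i ≤ s ^ k * (k:ℝ) ^ k * ((∑ i ∈ S, a i) / k) ^ k := by
          apply mul_le_mul_of_nonneg_left hamgm (by positivity)
    _ = s ^ k * (∑ i ∈ S, a i) ^ k := by
          rw [div_pow]
          field_simp
  have hfinal : (8 : ℝ) ^ (-(d : ℝ)) < δ := by
    calc (8 : ℝ) ^ (-(d : ℝ)) ≤ ((k : ℝ) / (2 * ((d : ℝ) + 1))) ^ k := real_key d k hk1 hkd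
    _ < (s * k / (∑ i ∈ S, a i)) ^ k := by
        apply pow_lt_pow_left₀ hstep1 (by positivity) (by omega)
    _ ≤ s ^ k / ∏ i ∈ S, a i := hstep2
    _ = ∏ i ∈ S, s / a i := hprodS.symm
    _ ≤ δ := hprod
  exact absurd hδ.2 (not_le.mpr hfinal)

lemma measurable_halfspace (a : Fin d → ℝ) (t : ℝ) :
    MeasurableSet {x : Euc d | t ≤ ∑ i, a i * x i} := by
  have hc : Continuous (fun x : Euc d => ∑ i, a i * x i) :=
    continuous_finset_sum _ fun i _ => continuous_const.mul (EuclideanSpace.proj i).continuous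
  exact (isClosed_le continuous_const hc).measurableSet

/-- Main cap-depth bound, origin form: a halfspace (w.r.t. a nonnegative functional)
containing `(1-δ)` of the simplex volume has `t` small. -/
lemma origin_bound (hd : 0 < d) {δ : ℝ} (hδ : δ ∈ Set.Ioc (0 : ℝ) ((8 : ℝ) ^ (-(d : ℝ))))
    (a : Fin d → ℝ) (ha : ∀ i, 0 ≤ a i) (t : ℝ)
    (hvol : ENNReal.ofReal (1 - δ) * volume (stdSimplex' d) ≤
      volume ({x : Euc d | t ≤ ∑ i, a i * x i} ∩ stdSimplex' d)) :
    t ≤ (∑ i, a i) / (2 * ((d : ℝ) + 1)) := by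
  classical
  by_contra hcon
  push_neg at hcon
  set B := (∑ i, a i) / (2 * ((d : ℝ) + 1)) with hBdef
  have hB0 : 0 ≤ B := by
    apply div_nonneg (Finset.sum_nonneg fun i _ => ha i); positivity
  set s := (B + t) / 2 with hsdef
  have hs : 0 < s := by unfold s; linarith
  have hst : s < t := by unfold s; linarith
  have hBs : B < s := by unfold s; linarith
  set c : Fin d → ℝ := fun i => if a i ≤ s then 1 else s / a i with hcdef
  have hceq : ∀ i, c i = if a i ≤ s then 1 else s / a i := fun i => rfl
  have hc0 : ∀ i, 0 < c i := by
    intro i; rw [hceq i]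
    by_cases h : a i ≤ s
    · simp [h]
    · rw [if_neg h]; push_neg at h; exact div_pos hs (lt_trans hs h)
  have hc1 : ∀ i, c i ≤ 1 := by
    intro i; rw [hceq i]
    by_cases h : a i ≤ s
    · simp [h]
    · rw [if_neg h]; push_neg at h
      rw [div_le_one (lt_trans hs h)]; linarith
  have hcs : ∀ i, a i * c i ≤ s := by
    intro i; rw [hceq i]
    by_cases h : a i ≤ s
    · rw [if_pos h, mul_one]; exact h
    · rw [if_neg h]; push_neg at h
      rw [mul_div_cancel₀ _ (ne_of_gt (lt_trans hs h))]
  -- image inclusion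
  have himg : diagMap c '' stdSimplex' d ⊆
      {x : Euc d | ∑ i, a i * x i < t} ∩ stdSimplex' d := by
    rintro y ⟨x, hx, rfl⟩
    have hxK : (∀ i, 0 ≤ x i) ∧ ∑ i, x i ≤ 1 := hx
    constructor
    · show ∑ i, a i * (diagMap c x i) < t
      calc ∑ i, a i * (diagMap c x i) = ∑ i, (a i * c i) * x i := by
            apply Finset.sum_congr rfl; intro i _; rw [diagMap_apply]; ring
      _ ≤ ∑ i, s * x i := Finset.sum_le_sum fun i _ =>
            mul_le_mul_of_nonneg_right (hcs i) (hxK.1 i)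
      _ = s * ∑ i, x i := by rw [Finset.mul_sum]
      _ ≤ s * 1 := mul_le_mul_of_nonneg_left hxK.2 hs.le
      _ < t := by linarith
    · constructor
      · intro i; rw [diagMap_apply]; exact mul_nonneg (hc0 i).le (hxK.1 i)
      · calc ∑ i, diagMap c x i ≤ ∑ i, x i := by
              apply Finset.sum_le_sum; intro i _; rw [diagMap_apply]
              nlinarith [hc1 i, hxK.1 i, hc0 i]
        _ ≤ 1 := hxK.2
  -- volume computation
  have hvol1 : volume (diagMap c '' stdSimplex' d)
      = ENNReal.ofReal (∏ i, c i) * volume (stdSimplex' d) := by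
    rw [Measure.addHaar_image_linearMap volume (diagMap c) (stdSimplex' d), det_diagMap,
      abs_of_nonneg (Finset.prod_nonneg fun i _ => (hc0 i).le)]
  set A := {x : Euc d | ∑ i, a i * x i < t} ∩ stdSimplex' d with hA
  set Bset := {x : Euc d | t ≤ ∑ i, a i * x i} ∩ stdSimplex' d with hBset
  have hdisj : Disjoint A Bset := by
    rw [Set.disjoint_left]
    rintro x ⟨h1, _⟩ ⟨h2, _⟩
    simp only [Set.mem_setOf_eq] at h1 h2
    linarith
  have hmeasB : MeasurableSet Bset := (measurable_halfspace a t).inter measurableSet_K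
  have hunion : volume A + volume Bset ≤ volume (stdSimplex' d) := by
    rw [← measure_union hdisj hmeasB]
    apply measure_mono
    rintro x (⟨_, h⟩ | ⟨_, h⟩) <;> exact h
  have hKfin : volume (stdSimplex' d) ≠ ⊤ := volK_lt_top.ne
  have hδ1 : δ < 1 := by
    refine lt_of_le_of_lt hδ.2 ?_
    apply Real.rpow_lt_one_of_one_lt_of_neg (by norm_num)
    simp only [Left.neg_neg_iff]
    exact_mod_cast hd
  have hsplitvol : volume (stdSimplex' d) = ENNReal.ofReal (1 - δ) * volume (stdSimplex' d)
      + ENNReal.ofReal δ * volume (stdSimplex' d) := by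
    rw [← add_mul, ← ENNReal.ofReal_add (by linarith) hδ.1.le]
    norm_num
  have hchain : ENNReal.ofReal (∏ i, c i) * volume (stdSimplex' d)
      + ENNReal.ofReal (1 - δ) * volume (stdSimplex' d)
      ≤ ENNReal.ofReal δ * volume (stdSimplex' d)
      + ENNReal.ofReal (1 - δ) * volume (stdSimplex' d) := by
    calc ENNReal.ofReal (∏ i, c i) * volume (stdSimplex' d)
        + ENNReal.ofReal (1 - δ) * volume (stdSimplex' d)
        ≤ volume A + volume Bset := by
          rw [← hvol1]
          exact add_le_add (measure_mono himg) hvol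
    _ ≤ volume (stdSimplex' d) := hunion
    _ = _ := by conv_lhs => rw [hsplitvol]
                rw [add_comm]
  rw [ENNReal.add_le_add_iff_right (ENNReal.mul_ne_top ENNReal.ofReal_ne_top hKfin)] at hchain
  rw [ENNReal.mul_le_mul_iff_left (ne_of_gt (volK_pos hd)) hKfin] at hchain
  rw [ENNReal.ofReal_le_ofReal_iff hδ.1.le] at hchain
  exact arith_contra hd hδ a ha hs hBs hchain

/-- affine map swapping vertex `eⱼ` with the origin -/
def swapAff (j : Fin d) (x : Euc d) : Euc d := swapLin j x + EuclideanSpace.single j 1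

lemma swapAff_apply (j : Fin d) (x : Euc d) (i : Fin d) :
    swapAff j x i = if i = j then 1 - ∑ k, x k else x i := by
  show swapLin j x i + (EuclideanSpace.single j (1:ℝ)) i = _
  rw [swapLin_apply, EuclideanSpace.single_apply]
  by_cases h : i = j <;> simp [h] <;> ring

lemma sum_swapAff (j : Fin d) (x : Euc d) : ∑ k, swapAff j x k = 1 - x j := by
  have h : ∀ k, swapAff j x k = if k = j then 1 - ∑ l, x l else x k := fun k => swapAff_apply j x k
  simp_rw [h]
  rw [sum_ite_single]
  ring

lemma swapAff_mem_K (j : Fin d) {x : Euc d} (hx : x ∈ stdSimplex' d) :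
    swapAff j x ∈ stdSimplex' d := by
  obtain ⟨hx1, hx2⟩ := hx
  constructor
  · intro i
    rw [swapAff_apply]
    by_cases h : i = j
    · rw [if_pos h]; linarith
    · rw [if_neg h]; exact hx1 i
  · rw [sum_swapAff]
    linarith [hx1 j]

lemma swapAff_invol (j : Fin d) (x : Euc d) : swapAff j (swapAff j x) = x := by
  ext i
  rw [swapAff_apply, sum_swapAff]
  by_cases h : i = j
  · rw [if_pos h, h]; ring
  · rw [if_neg h, swapAff_apply, if_neg h]

lemma inner_sum_form (x θ : Euc d) : ⟪x, θ⟫ = ∑ i, θ i * x i := by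
  rw [PiLp.inner_apply]
  apply Finset.sum_congr rfl
  intro i _
  simp [RCLike.inner_apply, conj_trivial, mul_comm]

lemma inner_swapAff (θ : Euc d) (j : Fin d) (x : Euc d) :
    ⟪swapAff j x, θ⟫ = θ j + ∑ i, (if i = j then -θ j else θ i - θ j) * x i := by
  rw [inner_sum_form]
  have h1 : ∀ i, θ i * swapAff j x i
      = (if i = j then (1 - ∑ k, x k) * θ j else θ i * x i) := by
    intro i; rw [swapAff_apply]
    by_cases h : i = j
    · subst h; rw [if_pos rfl, if_pos rfl]; ring
    · rw [if_neg h, if_neg h]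
  have h2 : ∀ i, (if i = j then -θ j else θ i - θ j) * x i
      = (if i = j then -(θ j * x j) else θ i * x i - θ j * x i) := by
    intro i
    by_cases h : i = j
    · subst h; rw [if_pos rfl, if_pos rfl]; ring
    · rw [if_neg h, if_neg h]; ring
  simp_rw [h1, h2]
  rw [sum_ite_single (fun i => θ i * x i) _ j, sum_ite_single (fun i => θ i * x i - θ j * x i) _ j]
  rw [Finset.sum_sub_distrib, ← Finset.mul_sum]
  ring

/-- The key geometric estimate: any halfspace containing a `(1-δ)` fraction of the simplex
contains the half-shrunk copy of the simplex around the centroid. -/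
lemma cap_bound (hd : 0 < d) {δ : ℝ} (hδ : δ ∈ Set.Ioc (0 : ℝ) ((8 : ℝ) ^ (-(d : ℝ))))
    (θ : Euc d) (t : ℝ)
    (hvol : ENNReal.ofReal (1 - δ) * volume (stdSimplex' d) ≤
      volume ({x : Euc d | t ≤ ⟪x, θ⟫} ∩ stdSimplex' d))
    {y : Euc d} (hy : y ∈ stdSimplex' d) :
    t ≤ (⟪y, θ⟫ + (∑ i, θ i) / ((d : ℝ) + 1)) / 2 := by
  classical
  obtain ⟨j, -, hj⟩ := Finset.exists_min_image Finset.univ (fun i => θ i)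
    ⟨⟨0, hd⟩, Finset.mem_univ _⟩
  have hjle : ∀ i, θ j ≤ θ i := fun i => hj i (Finset.mem_univ i)
  have hyin : ⟪y, θ⟫ = ∑ i, θ i * y i := inner_sum_form y θ
  have hdpos : (0:ℝ) < (d:ℝ) + 1 := by positivity
  by_cases hθj : 0 ≤ θ j
  · -- all coefficients nonnegative
    have hset : {x : Euc d | t ≤ ⟪x, θ⟫} = {x : Euc d | t ≤ ∑ i, θ i * x i} := by
      ext x; rw [Set.mem_setOf_eq, Set.mem_setOf_eq, inner_sum_form]
    rw [hset] at hvol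
    have hob := origin_bound hd hδ (fun i => θ i) (fun i => le_trans hθj (hjle i)) t hvol
    have hy0 : 0 ≤ ⟪y, θ⟫ := by
      rw [hyin]
      exact Finset.sum_nonneg fun i _ => mul_nonneg (le_trans hθj (hjle i)) (hy.1 i)
    have hdiv : (∑ i, θ i) / (2 * ((d:ℝ) + 1)) = ((∑ i, θ i) / ((d:ℝ)+1)) / 2 := by
      rw [div_div, mul_comm]
    linarith
  · push_neg at hθj
    set a : Fin d → ℝ := fun i => if i = j then -θ j else θ i - θ j with hadef
    have haeq : ∀ i, a i = if i = j then -θ j else θ i - θ j := fun i => rfl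
    have ha : ∀ i, 0 ≤ a i := by
      intro i; rw [haeq i]
      by_cases h : i = j
      · rw [if_pos h]; linarith
      · rw [if_neg h]; linarith [hjle i]
    -- transform the halfspace by the swap map
    have hsetEq : {x : Euc d | t - θ j ≤ ∑ i, a i * x i} ∩ stdSimplex' d
        = swapAff j '' ({x : Euc d | t ≤ ⟪x, θ⟫} ∩ stdSimplex' d) := by
      ext z
      constructor
      · rintro ⟨hz1, hz2⟩
        simp only [Set.mem_setOf_eq] at hz1
        refine ⟨swapAff j z, ⟨?_, swapAff_mem_K j hz2⟩, swapAff_invol j z⟩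
        rw [Set.mem_setOf_eq, inner_swapAff]
        have : ∑ i, (if i = j then -θ j else θ i - θ j) * z i = ∑ i, a i * z i := by
          apply Finset.sum_congr rfl; intro i _; rw [haeq i]
        rw [this]
        linarith
      · rintro ⟨x, ⟨hx1, hx2⟩, rfl⟩
        simp only [Set.mem_setOf_eq] at hx1
        refine ⟨?_, swapAff_mem_K j hx2⟩
        rw [Set.mem_setOf_eq]
        have hident := inner_swapAff θ j (swapAff j x)
        rw [swapAff_invol] at hident
        have h5 : ∑ i, a i * swapAff j x i
            = ∑ i, (if i = j then -θ j else θ i - θ j) * swapAff j x i := by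
          apply Finset.sum_congr rfl; intro i _; rw [haeq i]
        rw [h5]
        linarith
    have hvolpres : volume ({x : Euc d | t - θ j ≤ ∑ i, a i * x i} ∩ stdSimplex' d)
        = volume ({x : Euc d | t ≤ ⟪x, θ⟫} ∩ stdSimplex' d) := by
      rw [hsetEq]
      have hcomp : swapAff j '' ({x : Euc d | t ≤ ⟪x, θ⟫} ∩ stdSimplex' d)
          = (fun v => EuclideanSpace.single j (1:ℝ) + v) ''
            (swapLin j '' ({x : Euc d | t ≤ ⟪x, θ⟫} ∩ stdSimplex' d)) := by
        rw [← Set.image_comp]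
        apply Set.image_congr
        intro x _
        show swapAff j x = EuclideanSpace.single j 1 + swapLin j x
        rw [swapAff, add_comm]
      rw [hcomp]
      rw [show (fun v => EuclideanSpace.single j (1:ℝ) + v)
          = (fun v => EuclideanSpace.single j (1:ℝ) +ᵥ v) from rfl, Set.image_vadd,
        measure_vadd, Measure.addHaar_image_linearMap, abs_det_swapLin,
        ENNReal.ofReal_one, one_mul]
    rw [← hvolpres] at hvol
    have hob := origin_bound hd hδ a ha (t - θ j) hvol
    have hsuma : ∑ i, a i = ∑ i, θ i - ((d:ℝ) + 1) * θ j := by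
      have : ∀ i, a i = if i = j then -θ j else θ i - θ j := haeq
      simp_rw [this]
      rw [sum_ite_single (fun i => θ i - θ j) (-θ j) j, Finset.sum_sub_distrib]
      simp [Finset.sum_const, mul_comm]
      ring
    have hylb : θ j ≤ ⟪y, θ⟫ := by
      rw [hyin]
      calc θ j = θ j * 1 := (mul_one _).symm
      _ ≤ θ j * ∑ i, y i := by
          apply mul_le_mul_of_nonpos_left hy.2 hθj.le
      _ = ∑ i, θ j * y i := by rw [Finset.mul_sum]
      _ ≤ ∑ i, θ i * y i := Finset.sum_le_sum fun i _ =>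
          mul_le_mul_of_nonneg_right (hjle i) (hy.1 i)
    rw [hsuma] at hob
    have hdiv : (∑ i, θ i - ((d:ℝ) + 1) * θ j) / (2 * ((d:ℝ) + 1))
        = (∑ i, θ i) / (2 * ((d:ℝ)+1)) - θ j / 2 := by
      field_simp
    have hdiv2 : (∑ i, θ i) / (2 * ((d:ℝ)+1)) = ((∑ i, θ i) / ((d:ℝ)+1)) / 2 := by
      rw [div_div, mul_comm]
    linarith

section Main

/-- the floating body family -/
def fam (d : ℕ) (δ : ℝ) : Set (Set (Euc d)) :=
  {H : Set (Euc d) | ∃ θ : Euc d, ∃ t : ℝ, ‖θ‖ = 1 ∧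
      H = {x : Euc d | t ≤ ⟪x, θ⟫} ∧
      ENNReal.ofReal (1 - δ) * volume (stdSimplex' d) ≤ volume (H ∩ stdSimplex' d)}

lemma eps_pow {δ : ℝ} (hδ : δ ∈ Set.Ioc (0 : ℝ) ((8 : ℝ) ^ (-(d : ℝ)))) (hd : 0 < d) : (δ ^ ((d : ℝ)⁻¹)) ^ (d : ℕ) = δ := by
  rw [← Real.rpow_natCast (δ ^ ((d:ℝ)⁻¹)) d, ← Real.rpow_mul hδ.1.le,
    inv_mul_cancel₀ (by exact_mod_cast hd.ne' : ((d:ℝ) ≠ 0)), Real.rpow_one]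

lemma eps_le {δ : ℝ} (hδ : δ ∈ Set.Ioc (0 : ℝ) ((8 : ℝ) ^ (-(d : ℝ)))) (hd : 0 < d) : δ ^ ((d : ℝ)⁻¹) ≤ 1/8 := by
  have h8 : ((8:ℝ) ^ (-(d:ℝ))) ^ ((d:ℝ)⁻¹) = 1/8 := by
    rw [← Real.rpow_mul (by norm_num : (0:ℝ) ≤ 8), neg_mul,
      mul_inv_cancel₀ (by exact_mod_cast hd.ne' : ((d:ℝ) ≠ 0)), Real.rpow_neg_one]
    norm_num
  calc δ ^ ((d:ℝ)⁻¹) ≤ ((8:ℝ) ^ (-(d:ℝ))) ^ ((d:ℝ)⁻¹) :=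
        Real.rpow_le_rpow hδ.1.le hδ.2 (by positivity)
  _ = 1/8 := h8

lemma eps_pos {δ : ℝ} (hδ1 : 0 < δ) : 0 < δ ^ ((d : ℝ)⁻¹) := Real.rpow_pos_of_pos hδ1 _

lemma inner_neg_single (i : Fin d) (x : Euc d) : ⟪x, -(EuclideanSpace.single i (1:ℝ))⟫ = -(x i) := by
  rw [inner_neg_right, real_inner_comm, EuclideanSpace.inner_single_left]
  simp

/-- the cap at the first vertex is a shrunken translated simplex -/
lemma upper_cap_eq (i₀ : Fin d) {ε : ℝ} (hε0 : 0 < ε) (hε1 : ε ≤ 1) :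
    {x : Euc d | 1 - ε ≤ x i₀} ∩ stdSimplex' d
      = ((1 - ε) • EuclideanSpace.single i₀ (1:ℝ)) +ᵥ (ε • stdSimplex' d) := by
  ext z
  constructor
  · rintro ⟨hz1, hz2, hz3⟩
    simp only [Set.mem_setOf_eq] at hz1
    refine Set.mem_vadd_set.mpr ⟨ε • (ε⁻¹ • (z - (1 - ε) • EuclideanSpace.single i₀ (1:ℝ))),
      Set.smul_mem_smul_set ?_, ?_⟩
    · set y := ε⁻¹ • (z - (1 - ε) • EuclideanSpace.single i₀ (1:ℝ)) with hy
      have hyi : ∀ i, y i = ε⁻¹ * (z i - (1 - ε) * (if i = i₀ then 1 else 0)) := by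
        intro i
        show ε⁻¹ * ((z - (1 - ε) • EuclideanSpace.single i₀ (1:ℝ)) i) = _
        congr 1
        show z i - (1 - ε) * (EuclideanSpace.single i₀ (1:ℝ)) i = _
        rw [EuclideanSpace.single_apply]
      constructor
      · intro i
        rw [hyi i]
        by_cases h : i = i₀
        · rw [if_pos h, h]
          apply mul_nonneg (by positivity)
          linarith [hz1]
        · rw [if_neg h]
          have := hz2 i
          apply mul_nonneg (by positivity)
          linarith
      · have hsy : ∑ i, y i = ε⁻¹ * ((∑ i, z i) - (1 - ε)) := by
          simp_rw [hyi]
          rw [← Finset.mul_sum]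
          congr 1
          rw [Finset.sum_sub_distrib]
          congr 1
          rw [← Finset.mul_sum, Finset.sum_ite_eq' Finset.univ i₀ (fun _ => (1:ℝ))]
          simp
        rw [hsy]
        rw [← mul_one ε⁻¹] at *
        have h2 : (∑ i, z i) - (1 - ε) ≤ ε := by linarith [hz3]
        calc ε⁻¹ * 1 * ((∑ i, z i) - (1 - ε)) ≤ ε⁻¹ * 1 * ε := by
              apply mul_le_mul_of_nonneg_left h2 (by positivity)
        _ = 1 := by field_simp
    · rw [smul_smul, mul_inv_cancel₀ hε0.ne', one_smul, vadd_eq_add]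
      abel
  · rintro ⟨w, ⟨u, hu, rfl⟩, rfl⟩
    show ((1 - ε) • EuclideanSpace.single i₀ (1:ℝ) +ᵥ ε • u) ∈
      {x : Euc d | 1 - ε ≤ x i₀} ∩ stdSimplex' d
    have hcoord : ∀ i, ((1 - ε) • EuclideanSpace.single i₀ (1:ℝ) +ᵥ ε • u) i
        = (1 - ε) * (if i = i₀ then 1 else 0) + ε * u i := by
      intro i
      show (1 - ε) * (EuclideanSpace.single i₀ (1:ℝ)) i + ε * u i = _
      rw [EuclideanSpace.single_apply]
    refine ⟨?_, ?_, ?_⟩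
    · simp only [Set.mem_setOf_eq]
      rw [hcoord i₀, if_pos rfl, mul_one]
      nlinarith [hu.1 i₀]
    · intro i
      rw [hcoord i]
      by_cases h : i = i₀
      · rw [if_pos h]; nlinarith [hu.1 i]
      · rw [if_neg h]; nlinarith [hu.1 i]
    · have : ∑ i, ((1 - ε) • EuclideanSpace.single i₀ (1:ℝ) +ᵥ ε • u) i
          = (1 - ε) + ε * ∑ i, u i := by
        simp_rw [hcoord]
        rw [Finset.sum_add_distrib, ← Finset.mul_sum, ← Finset.mul_sum,
          Finset.sum_ite_eq' Finset.univ i₀ (fun _ => (1:ℝ))]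
        simp
      rw [this]
      nlinarith [hu.2]

/-- the key halfspace for Part 1 belongs to the floating body family -/
lemma H0_mem (hd : 0 < d) {δ : ℝ} (hδ : δ ∈ Set.Ioc (0 : ℝ) ((8 : ℝ) ^ (-(d : ℝ)))) (i₀ : Fin d) :
    {x : Euc d | -(1 - δ ^ ((d : ℝ)⁻¹)) ≤ ⟪x, -(EuclideanSpace.single i₀ (1:ℝ))⟫} ∈ fam d δ := by
  set ε := δ ^ ((d : ℝ)⁻¹) with hε
  have hε0 : 0 < ε := eps_pos hδ.1
  have hε1 : ε ≤ 1 := le_trans (eps_le hδ hd) (by norm_num)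
  refine ⟨-(EuclideanSpace.single i₀ (1:ℝ)), -(1 - ε), ?_, rfl, ?_⟩
  · rw [norm_neg, EuclideanSpace.norm_single, norm_one]
  · -- volume estimate
    have hcap : volume ({x : Euc d | 1 - ε ≤ x i₀} ∩ stdSimplex' d)
        = ENNReal.ofReal δ * volume (stdSimplex' d) := by
      rw [upper_cap_eq i₀ hε0 hε1, measure_vadd, Measure.addHaar_smul_of_nonneg volume hε0.le,
        finrank_euclideanSpace_fin, eps_pow hδ hd]
    have hcover : stdSimplex' d ⊆
        ({x : Euc d | -(1 - ε) ≤ ⟪x, -(EuclideanSpace.single i₀ (1:ℝ))⟫} ∩ stdSimplex' d)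
        ∪ ({x : Euc d | 1 - ε ≤ x i₀} ∩ stdSimplex' d) := by
      intro x hx
      by_cases h : 1 - ε ≤ x i₀
      · right; exact ⟨h, hx⟩
      · left
        refine ⟨?_, hx⟩
        rw [Set.mem_setOf_eq, inner_neg_single]
        push_neg at h
        linarith
    have hKfin : volume (stdSimplex' d) ≠ ⊤ := volK_lt_top.ne
    have hub := le_trans (measure_mono hcover) (measure_union_le (μ := volume) _ _)
    rw [hcap] at hub
    have hsplitvol : volume (stdSimplex' d) = ENNReal.ofReal (1 - δ) * volume (stdSimplex' d)
        + ENNReal.ofReal δ * volume (stdSimplex' d) := by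
      have hδ1 : δ < 1 := by
        refine lt_of_le_of_lt hδ.2 ?_
        apply Real.rpow_lt_one_of_one_lt_of_neg (by norm_num)
        simp only [Left.neg_neg_iff]
        exact_mod_cast hd
      rw [← add_mul, ← ENNReal.ofReal_add (by linarith) hδ.1.le]
      norm_num
    have hub2 : ENNReal.ofReal (1 - δ) * volume (stdSimplex' d)
        + ENNReal.ofReal δ * volume (stdSimplex' d)
        ≤ volume ({x : Euc d | -(1 - ε) ≤ ⟪x, -(EuclideanSpace.single i₀ (1:ℝ))⟫} ∩ stdSimplex' d)
        + ENNReal.ofReal δ * volume (stdSimplex' d) := by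
      rw [← hsplitvol]; exact hub
    exact (ENNReal.add_le_add_iff_right
      (ENNReal.mul_ne_top ENNReal.ofReal_ne_top hKfin)).mp hub2

/-- Part 1: the floating body lies below the cap hyperplane -/
lemma part1 (hd : 0 < d) {δ : ℝ} (hδ : δ ∈ Set.Ioc (0 : ℝ) ((8 : ℝ) ^ (-(d : ℝ)))) (i₀ : Fin d) {x : Euc d} (hx : x ∈ (⋂₀ fam d δ : Set (Euc d))) :
    x i₀ ≤ 1 - δ ^ ((d : ℝ)⁻¹) := by
  have h := hx _ (H0_mem hd hδ i₀)
  rw [Set.mem_setOf_eq, inner_neg_single] at h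
  linarith

/-- the floating body is contained in the simplex -/
lemma Kδ_sub_K (hd : 0 < d) {δ : ℝ} (hδ : δ ∈ Set.Ioc (0 : ℝ) ((8 : ℝ) ^ (-(d : ℝ)))) {x : Euc d} (hx : x ∈ (⋂₀ fam d δ : Set (Euc d))) : x ∈ stdSimplex' d := by
  have hofr : ENNReal.ofReal (1 - δ) ≤ 1 := ENNReal.ofReal_le_one.mpr (by linarith [hδ.1])
  have hKvol : ∀ H : Set (Euc d), stdSimplex' d ⊆ H →
      ENNReal.ofReal (1 - δ) * volume (stdSimplex' d) ≤ volume (H ∩ stdSimplex' d) := by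
    intro H hKH
    rw [Set.inter_eq_self_of_subset_right hKH]
    calc ENNReal.ofReal (1 - δ) * volume (stdSimplex' d) ≤ 1 * volume (stdSimplex' d) :=
          mul_le_mul_left hofr _
    _ = volume (stdSimplex' d) := one_mul _
  have hsd : (0:ℝ) < Real.sqrt d := Real.sqrt_pos.mpr (by exact_mod_cast hd)
  constructor
  · intro i
    have hmem : {y : Euc d | (0:ℝ) ≤ ⟪y, EuclideanSpace.single i (1:ℝ)⟫} ∈ fam d δ := by
      refine ⟨EuclideanSpace.single i (1:ℝ), 0, ?_, rfl, ?_⟩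
      · rw [EuclideanSpace.norm_single, norm_one]
      · apply hKvol
        intro y hy
        rw [Set.mem_setOf_eq, real_inner_comm, EuclideanSpace.inner_single_left, map_one, one_mul]
        exact hy.1 i
    have h := hx _ hmem
    rw [Set.mem_setOf_eq, real_inner_comm, EuclideanSpace.inner_single_left, map_one, one_mul] at h
    exact h
  · set θs : Euc d := WithLp.toLp 2 (fun _ => -(Real.sqrt d)⁻¹ : Fin d → ℝ) with hθs
    have hθcoord : ∀ i, θs i = -(Real.sqrt d)⁻¹ := fun i => rfl
    have hnorm : ‖θs‖ = 1 := by
      rw [EuclideanSpace.norm_eq]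
      have : ∀ i : Fin d, ‖θs i‖ ^ 2 = (d:ℝ)⁻¹ := by
        intro i
        rw [hθcoord i, norm_neg, norm_inv, Real.norm_eq_abs, abs_of_nonneg (Real.sqrt_nonneg _),
          ← Real.sqrt_inv, Real.sq_sqrt (by positivity)]
      rw [Finset.sum_congr rfl (fun i _ => this i)]
      rw [Finset.sum_const, Finset.card_univ, Fintype.card_fin, nsmul_eq_mul,
        mul_inv_cancel₀ (by exact_mod_cast hd.ne' : ((d:ℝ) ≠ 0)), Real.sqrt_one]
    have hinnersum : ∀ y : Euc d, ⟪y, θs⟫ = -(Real.sqrt d)⁻¹ * ∑ i, y i := by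
      intro y
      rw [inner_sum_form]
      rw [Finset.sum_congr rfl (fun i _ => by rw [hθcoord i] :
        ∀ i ∈ Finset.univ, θs i * y i = -(Real.sqrt d)⁻¹ * y i), ← Finset.mul_sum]
    have hmem : {y : Euc d | -(Real.sqrt d)⁻¹ ≤ ⟪y, θs⟫} ∈ fam d δ := by
      refine ⟨θs, -(Real.sqrt d)⁻¹, hnorm, rfl, ?_⟩
      apply hKvol
      intro y hy
      rw [Set.mem_setOf_eq, hinnersum]
      have h2 : (Real.sqrt d)⁻¹ * ∑ i, y i ≤ (Real.sqrt d)⁻¹ * 1 :=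
        mul_le_mul_of_nonneg_left hy.2 (by positivity)
      nlinarith
    have h := hx _ hmem
    rw [Set.mem_setOf_eq, hinnersum] at h
    have h2 : (Real.sqrt d)⁻¹ * ∑ i, x i ≤ (Real.sqrt d)⁻¹ * 1 := by nlinarith
    have h3 := (mul_le_mul_iff_of_pos_left (by positivity : (0:ℝ) < (Real.sqrt d)⁻¹)).mp h2
    linarith

end Main

lemma inner_cent (θ : Euc d) : ⟪cent d, θ⟫ = (∑ i, θ i) / ((d:ℝ)+1) := by
  rw [inner_sum_form]
  have h : ∀ i ∈ Finset.univ, θ i * cent d i = θ i * ((d:ℝ)+1)⁻¹ := fun i _ => rfl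
  rw [Finset.sum_congr rfl h, ← Finset.sum_mul, div_eq_mul_inv]

lemma sum_cent : ∑ i, cent d i = (d:ℝ) * ((d:ℝ)+1)⁻¹ := by
  have h : ∀ i ∈ Finset.univ, cent d i = ((d:ℝ)+1)⁻¹ := fun i _ => rfl
  rw [Finset.sum_congr rfl h, Finset.sum_const, Finset.card_univ, Fintype.card_fin, nsmul_eq_mul]

lemma shrink_into (hd : 0 < d) {δ : ℝ} (hδ : δ ∈ Set.Ioc (0 : ℝ) ((8 : ℝ) ^ (-(d : ℝ)))) :
    (fun y => (2:ℝ)⁻¹ • (y - cent d) + cent d) '' stdSimplex' d ⊆ ⋂₀ fam d δ := by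
  rintro _ ⟨y, hy, rfl⟩
  refine Set.mem_sInter.mpr fun H hH => ?_
  obtain ⟨θ, t, hθn, rfl, hvol⟩ := hH
  rw [Set.mem_setOf_eq]
  have hcb := cap_bound hd hδ θ t hvol hy
  have hin : ⟪(2:ℝ)⁻¹ • (y - cent d) + cent d, θ⟫ = (⟪y,θ⟫ + ⟪cent d, θ⟫)/2 := by
    rw [inner_add_left, real_inner_smul_left, inner_sub_left]
    ring
  rw [hin, inner_cent]
  exact hcb

lemma cent_mem_int_K (hd : 0 < d) : cent d ∈ interior (stdSimplex' d) :=
  mem_interior.mpr ⟨Metric.ball (cent d) (r0 d), ball_subset_K hd, Metric.isOpen_ball,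
    Metric.mem_ball_self (r0_pos hd)⟩

lemma cent_mem_int_Kδ (hd : 0 < d) {δ : ℝ} (hδ : δ ∈ Set.Ioc (0 : ℝ) ((8 : ℝ) ^ (-(d : ℝ)))) :
    cent d ∈ interior (⋂₀ fam d δ) := by
  have hsub : Metric.ball (cent d) (r0 d / 2)
      ⊆ (fun y => (2:ℝ)⁻¹ • (y - cent d) + cent d) '' stdSimplex' d := by
    intro z hz
    rw [Metric.mem_ball, dist_eq_norm] at hz
    refine ⟨(2:ℝ) • (z - cent d) + cent d, ball_subset_K hd ?_, ?_⟩
    · rw [Metric.mem_ball, dist_eq_norm, add_sub_cancel_right, norm_smul]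
      have h2 : ‖(2:ℝ)‖ = 2 := by norm_num
      rw [h2]
      linarith
    · show (2:ℝ)⁻¹ • ((2:ℝ) • (z - cent d) + cent d - cent d) + cent d = z
      rw [add_sub_cancel_right, smul_smul]
      norm_num
  exact mem_interior.mpr ⟨Metric.ball (cent d) (r0 d / 2),
    hsub.trans (shrink_into hd hδ), Metric.isOpen_ball,
    Metric.mem_ball_self (by linarith [r0_pos hd])⟩

lemma single_mem_K (hd : 0 < d) (i₀ : Fin d) : EuclideanSpace.single i₀ (1:ℝ) ∈ stdSimplex' d := by
  constructor
  · intro i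
    rw [EuclideanSpace.single_apply]
    by_cases h : i = i₀ <;> simp [h]
  · rw [Finset.sum_congr rfl (fun i _ => EuclideanSpace.single_apply i₀ 1 i),
      Finset.sum_ite_eq' Finset.univ i₀ (fun _ => (1:ℝ))]
    simp

lemma Kδ_sub_double (hd : 0 < d) {δ : ℝ} (hδ : δ ∈ Set.Ioc (0 : ℝ) ((8 : ℝ) ^ (-(d : ℝ)))) :
    (⋂₀ fam d δ : Set (Euc d)) ⊆ (fun y => (2:ℝ) • (y - cent d) + cent d) '' stdSimplex' d := by
  intro z hz
  have hzK := Kδ_sub_K hd hδ hz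
  refine ⟨(2:ℝ)⁻¹ • (z - cent d) + cent d, ?_, ?_⟩
  · have hcoord : ∀ i, ((2:ℝ)⁻¹ • (z - cent d) + cent d) i
        = 2⁻¹ * (z i - ((d:ℝ)+1)⁻¹) + ((d:ℝ)+1)⁻¹ := fun i => rfl
    have hdpos : (0:ℝ) < (d:ℝ) + 1 := by positivity
    constructor
    · intro i
      rw [hcoord i]
      have h1 := hzK.1 i
      have h2 : (0:ℝ) < ((d:ℝ)+1)⁻¹ := by positivity
      nlinarith
    · have hsum : ∑ i, ((2:ℝ)⁻¹ • (z - cent d) + cent d) i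
          = 2⁻¹ * ((∑ i, z i) - (d:ℝ) * ((d:ℝ)+1)⁻¹) + (d:ℝ) * ((d:ℝ)+1)⁻¹ := by
        rw [Finset.sum_congr rfl (fun i _ => hcoord i), Finset.sum_add_distrib,
          Finset.sum_const, Finset.card_univ, Fintype.card_fin, nsmul_eq_mul,
          ← Finset.mul_sum, Finset.sum_sub_distrib, Finset.sum_const, Finset.card_univ,
          Fintype.card_fin, nsmul_eq_mul]
      rw [hsum]
      have h3 : (d:ℝ) * ((d:ℝ)+1)⁻¹ ≤ 1 := by
        rw [← div_eq_mul_inv, div_le_one hdpos]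
        linarith
      nlinarith [hzK.2]
  · show (2:ℝ) • ((2:ℝ)⁻¹ • (z - cent d) + cent d - cent d) + cent d = z
    rw [add_sub_cancel_right, smul_smul]
    norm_num

end FBaux

/-- For the standard simplex `K = Δᵈ` and `δ ∈ (0, 8^{-d}]`:
`K_δ ⊆ {x : x₁ ≤ 1 - δ^{1/d}}` and `d_𝔏(K, K_δ) ≥ 1 + (1/2) δ^{1/d}`. -/
theorem simplex_floatingBody_lower_bound
    (d : ℕ) (hd : 0 < d) (δ : ℝ)
    (hδ : δ ∈ Set.Ioc (0 : ℝ) ((8 : ℝ) ^ (-(d : ℝ)))) :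
    floatingBody (stdSimplex' d) δ ⊆
        {x : Euc d | x ⟨0, hd⟩ ≤ 1 - δ ^ ((d : ℝ)⁻¹)} ∧
      1 + (1 / 2) * δ ^ ((d : ℝ)⁻¹) ≤
        logHausdorffDist (stdSimplex' d) (floatingBody (stdSimplex' d) δ) := by
  have hfb : floatingBody (stdSimplex' d) δ = ⋂₀ FBaux.fam d δ := rfl
  have hε0 : 0 < δ ^ ((d : ℝ)⁻¹) := FBaux.eps_pos hδ.1
  have hε8 : δ ^ ((d : ℝ)⁻¹) ≤ 1/8 := FBaux.eps_le hδ hd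
  constructor
  · intro x hx
    rw [hfb] at hx
    exact FBaux.part1 hd hδ (⟨0, hd⟩ : Fin d) hx
  · unfold logHausdorffDist
    apply le_csInf
    · -- the witness λ = 2
      refine ⟨2, by norm_num, FBaux.cent d, ?_, ?_, ?_⟩
      · rw [interior_inter]
        exact ⟨FBaux.cent_mem_int_K hd, by rw [hfb]; exact FBaux.cent_mem_int_Kδ hd hδ⟩
      · rw [hfb]
        exact FBaux.shrink_into hd hδ
      · rw [hfb]
        exact FBaux.Kδ_sub_double hd hδ
    · rintro b ⟨hb1, x, hxint, hsub, -⟩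
      have hb0 : (0:ℝ) < b := by linarith
      have hxmem := interior_subset hxint
      have hxK : x ∈ stdSimplex' d := hxmem.1
      have hxKδ : x ∈ (⋂₀ FBaux.fam d δ : Set (Euc d)) := hxmem.2
      have hx1 : x ⟨0, hd⟩ ≤ 1 - δ ^ ((d : ℝ)⁻¹) := FBaux.part1 hd hδ (⟨0, hd⟩ : Fin d) hxKδ
      have hy : b⁻¹ • (EuclideanSpace.single (⟨0, hd⟩ : Fin d) (1:ℝ) - x) + x
          ∈ (⋂₀ FBaux.fam d δ : Set (Euc d)) :=
        hsub ⟨_, FBaux.single_mem_K hd (⟨0, hd⟩ : Fin d), rfl⟩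
      have hy1 : (b⁻¹ • (EuclideanSpace.single (⟨0, hd⟩ : Fin d) (1:ℝ) - x) + x) ⟨0, hd⟩
          ≤ 1 - δ ^ ((d : ℝ)⁻¹) := FBaux.part1 hd hδ (⟨0, hd⟩ : Fin d) hy
      have hyc : (b⁻¹ • (EuclideanSpace.single (⟨0, hd⟩ : Fin d) (1:ℝ) - x) + x) ⟨0, hd⟩
          = b⁻¹ * (1 - x ⟨0, hd⟩) + x ⟨0, hd⟩ := by
        show b⁻¹ * ((EuclideanSpace.single (⟨0, hd⟩ : Fin d) (1:ℝ)) ⟨0, hd⟩ - x ⟨0, hd⟩) + x ⟨0, hd⟩ = _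
        rw [EuclideanSpace.single_apply, if_pos rfl]
      rw [hyc] at hy1
      set ε := δ ^ ((d : ℝ)⁻¹) with hεdef
      have hx0 : 0 ≤ x ⟨0, hd⟩ := hxK.1 _
      have hbinv1 : b⁻¹ ≤ 1 := inv_le_one_of_one_le₀ hb1
      have hbinv0 : 0 < b⁻¹ := by positivity
      have hyineq : b⁻¹ * (1 - x ⟨0, hd⟩) ≤ (1 - x ⟨0, hd⟩) - ε := by linarith
      have h1w : b⁻¹ * (1 - (1 - x ⟨0, hd⟩)) ≤ 1 - (1 - x ⟨0, hd⟩) := by nlinarith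
      have hid : b⁻¹ * (1 - x ⟨0, hd⟩) + b⁻¹ * (1 - (1 - x ⟨0, hd⟩)) = b⁻¹ := by ring
      have hinv : b⁻¹ ≤ 1 - ε := by linarith
      have hmul : b * b⁻¹ = 1 := mul_inv_cancel₀ (ne_of_gt hb0)
      nlinarith [mul_le_mul_of_nonneg_left hinv hb0.le,
        mul_le_mul_of_nonneg_right hb1 hε0.le]
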